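/- arXiv:1205.2978 — 3 statements merged into one kernel-verified Lean document; each statement's English description precedes it below -/
import Mathlib

section
/- Let f : [2, L] → ℝ be differentiable with f ≥ 0, and suppose there exist constants C > 0 and ε > 0 with ε > 1/C such that f'(t) - (1/C) f(t) + C e^{-εj} e^{εt} ≥ 0 for all t ∈ [2, L], where j ≥ L is a constant. Then f(2) ≤ C' (e^{-L/C} f(L) + e^{-j/C}) for some constant C' depending only on C and ε. -/
open Real

/-- ODE comparison lemma: if `f' - f/C + C e^{-εj} e^{εt} ≥ 0` on `[2, L]`,
with `ε > 1/C` and `j ≥ L ≥ 2`, then `f 2 ≤ C' (e^{-L/C} f L + e^{-j/C})`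
for a constant `C'` depending only on `C` and `ε`. -/
theorem stmt0 (C ε : ℝ) (hC : 0 < C) (hε : ε > 1 / C) :
    ∃ C' > (0:ℝ), ∀ (f : ℝ → ℝ) (L j : ℝ), 2 ≤ L → L ≤ j →
      (∀ t ∈ Set.Icc (2:ℝ) L, DifferentiableAt ℝ f t) →
      (∀ t ∈ Set.Icc (2:ℝ) L, 0 ≤ f t) →
      (∀ t ∈ Set.Icc (2:ℝ) L,
        deriv f t - (1 / C) * f t + C * exp (-ε * j) * exp (ε * t) ≥ 0) →
      f 2 ≤ C' * (exp (-L / C) * f L + exp (-j / C)) := by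
  have hεC : (0:ℝ) < ε - 1 / C := sub_pos.mpr hε
  set K : ℝ := C / (ε - 1 / C) with hKdef
  have hKpos : 0 < K := div_pos hC hεC
  have hKC : K * (ε - 1 / C) = C := div_mul_cancel₀ _ (ne_of_gt hεC)
  refine ⟨exp (2 / C) * (1 + K), by positivity, ?_⟩
  intro f L j hL hLj hdiff hpos hineq
  set g : ℝ → ℝ := fun t => exp (-(1/C) * t) * f t + K * exp (-ε * j) * exp ((ε - 1/C) * t)
    with hgdef
  have hgderiv : ∀ t ∈ Set.Icc (2:ℝ) L, HasDerivAt g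
      (exp (-(1/C)*t) * (deriv f t - (1/C) * f t + C * exp (-ε*j) * exp (ε*t))) t := by
    intro t ht
    have h1 : HasDerivAt (fun t : ℝ => exp (-(1/C) * t)) (exp (-(1/C)*t) * (-(1/C))) t := by
      simpa using ((hasDerivAt_id t).const_mul (-(1/C))).exp
    have hf := (hdiff t ht).hasDerivAt
    have h2 : HasDerivAt (fun t : ℝ => exp ((ε - 1/C) * t)) (exp ((ε - 1/C)*t) * (ε - 1/C)) t := by
      simpa using ((hasDerivAt_id t).const_mul (ε - 1/C)).exp
    have hsum := (h1.mul hf).add (h2.const_mul (K * exp (-ε * j)))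
    refine hsum.congr_deriv (Eq.symm ?_)
    have hexp : exp ((ε - 1/C)*t) = exp (-(1/C)*t) * exp (ε*t) := by
      rw [← exp_add]; ring_nf
    linear_combination (-(K * (ε - 1/C) * exp (-ε*j))) * hexp +
      (-(exp (-(1/C)*t) * exp (-ε*j) * exp (ε*t))) * hKC
  have hcont : ContinuousOn g (Set.Icc 2 L) :=
    fun t ht => (hgderiv t ht).continuousAt.continuousWithinAt
  have hmono : MonotoneOn g (Set.Icc 2 L) := by
    apply monotoneOn_of_deriv_nonneg (convex_Icc _ _) hcont
    · rw [interior_Icc]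
      exact fun t ht =>
        ((hgderiv t (Set.Ioo_subset_Icc_self ht)).differentiableAt).differentiableWithinAt
    · rw [interior_Icc]
      intro t ht
      rw [(hgderiv t (Set.Ioo_subset_Icc_self ht)).deriv]
      exact mul_nonneg (exp_pos _).le (hineq t (Set.Ioo_subset_Icc_self ht))
  have h2mem : (2:ℝ) ∈ Set.Icc (2:ℝ) L := ⟨le_refl _, hL⟩
  have hLmem : L ∈ Set.Icc (2:ℝ) L := ⟨hL, le_refl _⟩
  have key : g 2 ≤ g L := hmono h2mem hLmem hL
  -- unfold
  simp only [hgdef] at key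
  -- bound the exponential term on the RHS
  have hexpbd : exp (-ε * j) * exp ((ε - 1/C) * L) ≤ exp (-(1/C) * j) := by
    rw [← exp_add, exp_le_exp]
    have : (ε - 1/C) * L ≤ (ε - 1/C) * j := by
      apply mul_le_mul_of_nonneg_left hLj (le_of_lt hεC)
    nlinarith
  have hfL : 0 ≤ f L := hpos L hLmem
  have h1 : exp (-(1/C) * 2) * f 2 ≤
      exp (-(1/C) * L) * f L + K * exp (-(1/C) * j) := by
    have hterm : 0 ≤ K * exp (-ε * j) * exp ((ε - 1/C) * 2) := by positivity
    have hterm2 : K * (exp (-ε * j) * exp ((ε - 1/C) * L)) ≤ K * exp (-(1/C) * j) :=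
      mul_le_mul_of_nonneg_left hexpbd (le_of_lt hKpos)
    nlinarith
  -- convert to the final form
  have hee : exp (2 / C) * exp (-(1/C) * 2) = 1 := by
    rw [← exp_add, show 2 / C + -(1/C) * 2 = 0 by ring, exp_zero]
  have hLe : exp (-(1/C) * L) = exp (-L / C) := by ring_nf
  have hje : exp (-(1/C) * j) = exp (-j / C) := by ring_nf
  rw [hLe, hje] at h1
  have h2 : f 2 ≤ exp (2 / C) * (exp (-L / C) * f L + K * exp (-j / C)) := by
    have := mul_le_mul_of_nonneg_left h1 (le_of_lt (exp_pos (2 / C)))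
    calc f 2 = exp (2 / C) * exp (-(1/C) * 2) * f 2 := by rw [hee]; ring
      _ = exp (2 / C) * (exp (-(1/C) * 2) * f 2) := by ring
      _ ≤ _ := this
  calc f 2 ≤ exp (2 / C) * (exp (-L / C) * f L + K * exp (-j / C)) := h2
    _ ≤ exp (2 / C) * ((1 + K) * (exp (-L / C) * f L + exp (-j / C))) := by
        have hA : 0 ≤ exp (-L / C) * f L := by positivity
        have hB : (0:ℝ) < exp (-j / C) := exp_pos _
        have hinner : exp (-L / C) * f L + K * exp (-j / C) ≤
            (1 + K) * (exp (-L / C) * f L + exp (-j / C)) := by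
          nlinarith [mul_nonneg hKpos.le hA]
        exact mul_le_mul_of_nonneg_left hinner (exp_pos _).le
    _ = exp (2 / C) * (1 + K) * (exp (-L / C) * f L + exp (-j / C)) := by ring
end

section
/- Let u : ℝ² → ℝ^K be a C² map and τ : ℝ² → ℝ^K satisfy Δu + A(x) = τ where A(x) ⊥ ∇u(x) pointwise (i.e. A(x) · ∂_i u(x) = 0 for i = 1,2). Then for every t > 0, ∫_{∂D_t} (|∂_r u|² - r^{-2} |∂_θ u|²) ds = (2/t) ∫_{D_t} τ · (x · ∇u) dx, where x · ∇u = x₁ ∂₁ u + x₂ ∂₂ u. -/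
open Real MeasureTheory RealInnerProductSpace

section Alg
variable {E : Type*} [NormedAddCommGroup E] [InnerProductSpace ℝ E]

lemma poh_rot (B : ℂ →L[ℝ] ℂ →L[ℝ] E) (hB : ∀ v w : ℂ, B v w = B w v) (w : ℂ) :
    B w w + B (Complex.I * w) (Complex.I * w)
      = Complex.normSq w • (B 1 1 + B Complex.I Complex.I) := by
  obtain ⟨a, b⟩ := w
  have h1 : (⟨a, b⟩ : ℂ) = a • (1:ℂ) + b • Complex.I := by
    apply Complex.ext <;> simp
  have h2 : Complex.I * (⟨a, b⟩ : ℂ) = (-b) • (1:ℂ) + a • Complex.I := by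
    apply Complex.ext <;> simp
  rw [h2, Complex.normSq_mk]
  nth_rewrite 1 [h1]
  nth_rewrite 1 [h1]
  simp only [map_add, _root_.map_smul, ContinuousLinearMap.add_apply,
    ContinuousLinearMap.smul_apply]
  rw [hB Complex.I 1]
  module

lemma poh_alg (L : ℂ →L[ℝ] E) (B : ℂ →L[ℝ] ℂ →L[ℝ] E) (hB : ∀ v w : ℂ, B v w = B w v)
    (r : ℝ) (w z : ℂ) (hw : Complex.normSq w = 1) (hz : z = r * w) :
    (⟪L z, B w z + L w⟫ + ⟪B w z + L w, L z⟫
      - (⟪L (Complex.I*z), B w (Complex.I*z) + L (Complex.I*w)⟫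
          + ⟪B w (Complex.I*z) + L (Complex.I*w), L (Complex.I*z)⟫)) / 2
    + (⟪L (Complex.I*z), B (z*Complex.I) w + L (w*Complex.I)⟫
        + ⟪B (z*Complex.I) (Complex.I*z) + L (Complex.I*(z*Complex.I)), L w⟫)
    = r * ⟪B 1 1 + B Complex.I Complex.I, L z⟫ := by
  subst hz
  have h1 : (r:ℂ) * w = r • w := by rw [Complex.real_smul]
  have h2 : Complex.I * ((r:ℂ) * w) = r • (Complex.I * w) := by rw [Complex.real_smul]; ring
  have h3 : ((r:ℂ) * w) * Complex.I = r • (Complex.I * w) := by rw [Complex.real_smul]; ring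
  have h4 : Complex.I * (((r:ℂ) * w) * Complex.I) = (-r) • w := by
    rw [Complex.real_smul]; push_cast; linear_combination (↑r * w) * Complex.I_sq
  have h5 : w * Complex.I = Complex.I * w := mul_comm _ _
  rw [h4, h2, h3, h5, h1]
  have e4 : ⟪B w w, L w⟫ + ⟪B (Complex.I*w) (Complex.I*w), L w⟫
      = ⟪B 1 1, L w⟫ + ⟪B Complex.I Complex.I, L w⟫ := by
    rw [← inner_add_left, ← inner_add_left, poh_rot B hB w, hw, one_smul]
  have c1 := real_inner_comm (L w) (B w w)
  have c2 := real_inner_comm (L (Complex.I*w)) (B w (Complex.I*w))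
  simp only [_root_.map_smul, ContinuousLinearMap.smul_apply, neg_smul, map_neg,
    ContinuousLinearMap.neg_apply, inner_add_left, inner_add_right, real_inner_smul_left,
    real_inner_smul_right, inner_neg_left, inner_neg_right]
  rw [hB (Complex.I * w) w]
  linear_combination -(r^2/2)*c1 - (r^2/2)*c2 + r^2*e4


local notation "𝕀" => Complex.I

noncomputable def pohg (u : ℂ → E) (x : ℂ) : ℝ :=
  ⟪fderiv ℝ (fderiv ℝ u) x 1 1 + fderiv ℝ (fderiv ℝ u) x 𝕀 𝕀, fderiv ℝ u x x⟫

noncomputable def pohG (u : ℂ → E) (r θ : ℝ) : ℝ :=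
  (⟪fderiv ℝ u (circleMap 0 r θ) (circleMap 0 r θ),
      fderiv ℝ u (circleMap 0 r θ) (circleMap 0 r θ)⟫
    - ⟪fderiv ℝ u (circleMap 0 r θ) (𝕀 * circleMap 0 r θ),
        fderiv ℝ u (circleMap 0 r θ) (𝕀 * circleMap 0 r θ)⟫) / 2

noncomputable def pohH (u : ℂ → E) (r θ : ℝ) : ℝ :=
  ⟪fderiv ℝ u (circleMap 0 r θ) (𝕀 * circleMap 0 r θ),
    fderiv ℝ u (circleMap 0 r θ) (circleMap 0 1 θ)⟫

noncomputable def pohDG (u : ℂ → E) (r θ : ℝ) : ℝ :=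
  letI z := circleMap 0 r θ
  letI w := circleMap 0 1 θ
  letI f := fderiv ℝ u
  letI B := fderiv ℝ (fderiv ℝ u) z
  (⟪f z z, B w z + f z w⟫ + ⟪B w z + f z w, f z z⟫
    - (⟪f z (𝕀*z), B w (𝕀*z) + f z (𝕀*w)⟫ + ⟪B w (𝕀*z) + f z (𝕀*w), f z (𝕀*z)⟫)) / 2

noncomputable def pohDH (u : ℂ → E) (r θ : ℝ) : ℝ :=
  letI z := circleMap 0 r θ
  letI w := circleMap 0 1 θ
  letI f := fderiv ℝ u
  letI B := fderiv ℝ (fderiv ℝ u) z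
  ⟪f z (𝕀*z), B (z*𝕀) w + f z (w*𝕀)⟫ + ⟪B (z*𝕀) (𝕀*z) + f z (𝕀*(z*𝕀)), f z w⟫

variable {u : ℂ → E}

lemma poh_curve_r (θ : ℝ) (r : ℝ) :
    HasDerivAt (fun s : ℝ => circleMap 0 s θ) (circleMap 0 1 θ) r := by
  simpa [circleMap] using
    ((Complex.ofRealCLM.hasDerivAt (x := r)).mul_const (Complex.exp (θ * 𝕀)))

lemma poh_G_hasDeriv (hu : ContDiff ℝ 2 u) (θ r : ℝ) :
    HasDerivAt (fun s => pohG u s θ) (pohDG u r θ) r := by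
  have hfd : Differentiable ℝ (fderiv ℝ u) :=
    (hu.fderiv_right (le_refl 2)).differentiable (by norm_num : (1 : WithTop ℕ∞) ≠ 0)
  have h1 := poh_curve_r θ r
  have h2 : HasDerivAt (fun s : ℝ => fderiv ℝ u (circleMap 0 s θ))
      ((fderiv ℝ (fderiv ℝ u) (circleMap 0 r θ)) (circleMap 0 1 θ)) r :=
    (hfd _).hasFDerivAt.comp_hasDerivAt r h1
  have ha := h2.clm_apply h1
  have hb := h2.clm_apply (h1.const_mul 𝕀)
  exact (((ha.inner ℝ ha).sub (hb.inner ℝ hb)).div_const 2)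

lemma poh_H_hasDeriv (hu : ContDiff ℝ 2 u) (r θ : ℝ) :
    HasDerivAt (fun φ => pohH u r φ) (pohDH u r θ) θ := by
  have hfd : Differentiable ℝ (fderiv ℝ u) :=
    (hu.fderiv_right (le_refl 2)).differentiable (by norm_num : (1 : WithTop ℕ∞) ≠ 0)
  have h1 := hasDerivAt_circleMap 0 r θ
  have hw := hasDerivAt_circleMap 0 1 θ
  have h2 : HasDerivAt (fun φ : ℝ => fderiv ℝ u (circleMap 0 r φ))
      ((fderiv ℝ (fderiv ℝ u) (circleMap 0 r θ)) (circleMap 0 r θ * 𝕀)) θ :=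
    (hfd _).hasFDerivAt.comp_hasDerivAt θ h1
  have hp := h2.clm_apply (h1.const_mul 𝕀)
  have hq := h2.clm_apply hw
  exact (hp.inner ℝ hq)

lemma poh_sum (hu : ContDiff ℝ 2 u) (r θ : ℝ) :
    pohDG u r θ + pohDH u r θ = r * pohg u (circleMap 0 r θ) := by
  have hfd : Differentiable ℝ (fderiv ℝ u) :=
    (hu.fderiv_right (le_refl 2)).differentiable (by norm_num : (1 : WithTop ℕ∞) ≠ 0)
  have hud : Differentiable ℝ u := hu.differentiable two_ne_zero
  have hB : ∀ v w : ℂ, fderiv ℝ (fderiv ℝ u) (circleMap 0 r θ) v w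
      = fderiv ℝ (fderiv ℝ u) (circleMap 0 r θ) w v :=
    second_derivative_symmetric (fun y => (hud y).hasFDerivAt)
      ((hfd _).hasFDerivAt)
  have hw : Complex.normSq (circleMap 0 1 θ) = 1 := by
    rw [← Complex.sq_norm, norm_circleMap_zero]; norm_num
  have hz : circleMap 0 r θ = (r : ℂ) * circleMap 0 1 θ := by
    simp [circleMap]
  exact poh_alg (fderiv ℝ u (circleMap 0 r θ))
    (fderiv ℝ (fderiv ℝ u) (circleMap 0 r θ)) hB r _ _ hw hz


example : polarCoord.target = Set.Ioi 0 ×ˢ Set.Ioo (-π) π := rfl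

lemma poh_contZ : Continuous (fun p : ℝ × ℝ => circleMap 0 p.1 p.2) := by
  simp only [circleMap]
  fun_prop

lemma poh_contW : Continuous (fun p : ℝ × ℝ => circleMap 0 1 p.2) :=
  poh_contZ.comp (continuous_const.prodMk continuous_snd)

lemma poh_cont_g (hu : ContDiff ℝ 2 u) : Continuous (pohg u) := by
  have hcf : Continuous (fderiv ℝ u) := (hu.fderiv_right (m := 1) (by norm_num)).continuous
  have hcf' : Continuous (fderiv ℝ (fderiv ℝ u)) :=
    (hu.fderiv_right (m := 1) (le_refl 2)).continuous_fderiv one_ne_zero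
  unfold pohg
  exact Continuous.inner
    (((hcf'.clm_apply continuous_const).clm_apply continuous_const).add
      ((hcf'.clm_apply continuous_const).clm_apply continuous_const))
    (hcf.clm_apply continuous_id)

lemma poh_cont_DG (hu : ContDiff ℝ 2 u) :
    Continuous (fun p : ℝ × ℝ => pohDG u p.1 p.2) := by
  have hcf : Continuous (fderiv ℝ u) := (hu.fderiv_right (m := 1) (by norm_num)).continuous
  have hcf' : Continuous (fderiv ℝ (fderiv ℝ u)) :=
    (hu.fderiv_right (m := 1) (le_refl 2)).continuous_fderiv one_ne_zero
  unfold pohDG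
  have hz := poh_contZ
  have hw := poh_contW
  have hfz : Continuous (fun p : ℝ × ℝ => fderiv ℝ u (circleMap 0 p.1 p.2)) := hcf.comp hz
  have hBz : Continuous (fun p : ℝ × ℝ => fderiv ℝ (fderiv ℝ u) (circleMap 0 p.1 p.2)) :=
    hcf'.comp hz
  have hIz : Continuous (fun p : ℝ × ℝ => 𝕀 * circleMap 0 p.1 p.2) := continuous_const.mul hz
  have hIw : Continuous (fun p : ℝ × ℝ => 𝕀 * circleMap 0 1 p.2) := continuous_const.mul hw
  exact ((((hfz.clm_apply hz).inner (((hBz.clm_apply hw).clm_apply hz).add (hfz.clm_apply hw))).add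
      ((((hBz.clm_apply hw).clm_apply hz).add (hfz.clm_apply hw)).inner (hfz.clm_apply hz))).sub
      (((hfz.clm_apply hIz).inner (((hBz.clm_apply hw).clm_apply hIz).add (hfz.clm_apply hIw))).add
        ((((hBz.clm_apply hw).clm_apply hIz).add (hfz.clm_apply hIw)).inner
          (hfz.clm_apply hIz)))).div_const 2

lemma poh_cont_DH (hu : ContDiff ℝ 2 u) :
    Continuous (fun p : ℝ × ℝ => pohDH u p.1 p.2) := by
  have hcf : Continuous (fderiv ℝ u) := (hu.fderiv_right (m := 1) (by norm_num)).continuous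
  have hcf' : Continuous (fderiv ℝ (fderiv ℝ u)) :=
    (hu.fderiv_right (m := 1) (le_refl 2)).continuous_fderiv one_ne_zero
  unfold pohDH
  have hz := poh_contZ
  have hw := poh_contW
  have hfz : Continuous (fun p : ℝ × ℝ => fderiv ℝ u (circleMap 0 p.1 p.2)) := hcf.comp hz
  have hBz : Continuous (fun p : ℝ × ℝ => fderiv ℝ (fderiv ℝ u) (circleMap 0 p.1 p.2)) :=
    hcf'.comp hz
  have hIz : Continuous (fun p : ℝ × ℝ => 𝕀 * circleMap 0 p.1 p.2) := continuous_const.mul hz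
  have hIw : Continuous (fun p : ℝ × ℝ => 𝕀 * circleMap 0 1 p.2) := continuous_const.mul hw
  have hzI : Continuous (fun p : ℝ × ℝ => circleMap 0 p.1 p.2 * 𝕀) := hz.mul continuous_const
  have hwI : Continuous (fun p : ℝ × ℝ => circleMap 0 1 p.2 * 𝕀) := hw.mul continuous_const
  have hIzI : Continuous (fun p : ℝ × ℝ => 𝕀 * (circleMap 0 p.1 p.2 * 𝕀)) :=
    continuous_const.mul hzI
  exact ((hfz.clm_apply hIz).inner (((hBz.clm_apply hzI).clm_apply hw).add
      (hfz.clm_apply hwI))).add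
    ((((hBz.clm_apply hzI).clm_apply hIz).add (hfz.clm_apply hIzI)).inner (hfz.clm_apply hw))

lemma poh_cont_G (hu : ContDiff ℝ 2 u) :
    Continuous (fun p : ℝ × ℝ => pohG u p.1 p.2) := by
  have hcf : Continuous (fderiv ℝ u) := (hu.fderiv_right (m := 1) (by norm_num)).continuous
  unfold pohG
  have hz := poh_contZ
  have hfz : Continuous (fun p : ℝ × ℝ => fderiv ℝ u (circleMap 0 p.1 p.2)) := hcf.comp hz
  have hIz : Continuous (fun p : ℝ × ℝ => 𝕀 * circleMap 0 p.1 p.2) := continuous_const.mul hz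
  exact (((hfz.clm_apply hz).inner (hfz.clm_apply hz)).sub
    ((hfz.clm_apply hIz).inner (hfz.clm_apply hIz))).div_const 2


set_option maxHeartbeats 1000000 in
lemma poh_key [CompleteSpace E] (hu : ContDiff ℝ 2 u) {t : ℝ} (ht : 0 < t) :
    ∫ x in Metric.ball (0:ℂ) t, pohg u x = ∫ θ in Set.Ioo (-π) π, pohG u t θ := by
  have hcg := poh_cont_g hu
  have hφc : Continuous fun p : ℝ × ℝ => p.1 * pohg u (circleMap 0 p.1 p.2) :=
    continuous_fst.mul (hcg.comp poh_contZ)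
  have hsub : (Set.Ioo (0:ℝ) t ×ˢ Set.Ioo (-π) π) ⊆ Set.Icc (0:ℝ) t ×ˢ Set.Icc (-π) π :=
    Set.prod_mono Set.Ioo_subset_Icc_self Set.Ioo_subset_Icc_self
  have hcomp : IsCompact (Set.Icc (0:ℝ) t ×ˢ Set.Icc (-π) π) := isCompact_Icc.prod isCompact_Icc
  have hsymm_eq : ∀ p : ℝ × ℝ, Complex.polarCoord.symm p = circleMap 0 p.1 p.2 := by
    intro p
    rw [Complex.polarCoord_symm_apply]
    simp [circleMap, Complex.exp_mul_I]
  have h1 : ∫ x in Metric.ball (0:ℂ) t, pohg u x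
      = ∫ p in Set.Ioo (0:ℝ) t ×ˢ Set.Ioo (-π) π, p.1 * pohg u (circleMap 0 p.1 p.2) := by
    rw [← MeasureTheory.integral_indicator measurableSet_ball,
      ← Complex.integral_comp_polarCoord_symm]
    have hset : polarCoord.target ∩ {p : ℝ × ℝ | p.1 < t}
        = Set.Ioo (0:ℝ) t ×ˢ Set.Ioo (-π) π := by
      rw [show polarCoord.target = Set.Ioi (0:ℝ) ×ˢ Set.Ioo (-π) π from rfl]
      ext ⟨r, θ⟩
      simp only [Set.mem_inter_iff, Set.mem_prod, Set.mem_Ioi, Set.mem_Ioo, Set.mem_setOf_eq]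
      tauto
    rw [← hset, ← MeasureTheory.setIntegral_indicator
      (measurableSet_lt measurable_fst measurable_const)]
    apply MeasureTheory.setIntegral_congr_fun polarCoord.open_target.measurableSet
    intro p hp
    have hp1 : 0 < p.1 := hp.1
    dsimp only
    rw [hsymm_eq p]
    by_cases hlt : p.1 < t
    · have hmem : circleMap 0 p.1 p.2 ∈ Metric.ball (0:ℂ) t := by
        rw [mem_ball_zero_iff, norm_circleMap_zero, abs_of_pos hp1]
        exact hlt
      rw [Set.indicator_of_mem hmem, Set.indicator_of_mem (show p ∈ {a : ℝ × ℝ | a.1 < t} from hlt), smul_eq_mul]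
    · have hmem : circleMap 0 p.1 p.2 ∉ Metric.ball (0:ℂ) t := by
        rw [mem_ball_zero_iff, norm_circleMap_zero, abs_of_pos hp1]
        exact hlt
      rw [Set.indicator_of_notMem hmem, Set.indicator_of_notMem (show p ∉ {a : ℝ × ℝ | a.1 < t} from hlt), smul_zero]
  have hint : IntegrableOn (fun p : ℝ × ℝ => p.1 * pohg u (circleMap 0 p.1 p.2))
      (Set.Ioo (0:ℝ) t ×ˢ Set.Ioo (-π) π) :=
    (hφc.continuousOn.integrableOn_compact hcomp).mono_set hsub
  have h2 : ∫ p in Set.Ioo (0:ℝ) t ×ˢ Set.Ioo (-π) π, p.1 * pohg u (circleMap 0 p.1 p.2)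
      = ∫ r in Set.Ioo (0:ℝ) t, ∫ θ in Set.Ioo (-π) π, r * pohg u (circleMap 0 r θ) := by
    rw [show (volume : Measure (ℝ × ℝ)) = (volume : Measure ℝ).prod volume from
      MeasureTheory.Measure.volume_eq_prod ℝ ℝ]
    rw [MeasureTheory.setIntegral_prod _ (by
      rwa [← MeasureTheory.Measure.volume_eq_prod])]
  have h3 : ∀ r : ℝ, ∫ θ in Set.Ioo (-π) π, r * pohg u (circleMap 0 r θ)
      = ∫ θ in Set.Ioo (-π) π, pohDG u r θ := by
    intro r
    have hDHc : Continuous (fun θ => pohDH u r θ) := by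
      have h := poh_cont_DH hu; fun_prop
    have hDGc : Continuous (fun θ => pohDG u r θ) := by
      have h := poh_cont_DG hu; fun_prop
    have hFeq : ∀ θ : ℝ, r * pohg u (circleMap 0 r θ) = pohDG u r θ + pohDH u r θ :=
      fun θ => (poh_sum hu r θ).symm
    simp_rw [hFeq]
    rw [MeasureTheory.integral_add
      ((hDGc.continuousOn.integrableOn_compact isCompact_Icc).mono_set Set.Ioo_subset_Icc_self)
      ((hDHc.continuousOn.integrableOn_compact isCompact_Icc).mono_set Set.Ioo_subset_Icc_self)]
    have hDH0 : ∫ θ in Set.Ioo (-π) π, pohDH u r θ = 0 := by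
      rw [← MeasureTheory.integral_Ioc_eq_integral_Ioo,
        ← intervalIntegral.integral_of_le (by linarith [Real.pi_pos])]
      rw [intervalIntegral.integral_eq_sub_of_hasDerivAt
        (fun θ _ => poh_H_hasDeriv hu r θ) (hDHc.intervalIntegrable _ _)]
      have e1 : ∀ R : ℝ, circleMap (0:ℂ) R π = circleMap 0 R (-π) := by
        intro R
        have h := periodic_circleMap (0:ℂ) R (-π)
        rw [show -π + 2*π = π by ring] at h
        exact h
      unfold pohH
      rw [e1, e1]
      ring
    rw [hDH0, add_zero]
  rw [h1, h2]
  simp_rw [h3]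
  have hDGint : MeasureTheory.Integrable (Function.uncurry fun r θ => pohDG u r θ)
      ((volume.restrict (Set.Ioo (0:ℝ) t)).prod (volume.restrict (Set.Ioo (-π) π))) := by
    rw [MeasureTheory.Measure.prod_restrict, ← MeasureTheory.Measure.volume_eq_prod]
    exact (((poh_cont_DG hu).continuousOn.integrableOn_compact hcomp).mono_set hsub)
  have hswap : (∫ r in Set.Ioo (0:ℝ) t, ∫ θ in Set.Ioo (-π) π, pohDG u r θ)
      = ∫ θ in Set.Ioo (-π) π, ∫ r in Set.Ioo (0:ℝ) t, pohDG u r θ :=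
    MeasureTheory.integral_integral_swap hDGint
  rw [hswap]
  have h5 : ∀ θ : ℝ, ∫ r in Set.Ioo (0:ℝ) t, pohDG u r θ = pohG u t θ := by
    intro θ
    have hDGc : Continuous (fun r => pohDG u r θ) := by
      have h := poh_cont_DG hu; fun_prop
    rw [← MeasureTheory.integral_Ioc_eq_integral_Ioo,
      ← intervalIntegral.integral_of_le ht.le]
    rw [intervalIntegral.integral_eq_sub_of_hasDerivAt
      (fun r _ => poh_G_hasDeriv hu θ r) (hDGc.intervalIntegrable _ _)]
    have h0 : pohG u 0 θ = 0 := by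
      unfold pohG
      simp [circleMap]
    rw [h0, sub_zero]
  simp_rw [h5]

end Alg

/-- Pohozaev identity for almost harmonic maps: if `Δu + A = τ` on `ℝ² ≃ ℂ` with
`A` pointwise orthogonal to the partial derivatives of `u`, then for every `t > 0`,
`∫_{∂D_t} (|∂_r u|² - r⁻²|∂_θ u|²) ds = (2/t) ∫_{D_t} τ · (x·∇u) dx`. -/
theorem stmt2 (K : ℕ) (u A τ : ℂ → EuclideanSpace ℝ (Fin K))
    (hu : ContDiff ℝ 2 u)
    (heq : ∀ x : ℂ,
      fderiv ℝ (fun y => fderiv ℝ u y 1) x 1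
        + fderiv ℝ (fun y => fderiv ℝ u y Complex.I) x Complex.I + A x = τ x)
    (hperp : ∀ x : ℂ, ⟪A x, fderiv ℝ u x 1⟫ = 0 ∧ ⟪A x, fderiv ℝ u x Complex.I⟫ = 0) :
    ∀ t : ℝ, 0 < t →
      (∫ θ in (0:ℝ)..(2 * Real.pi),
          (‖fderiv ℝ u (circleMap 0 t θ) (circleMap 0 t θ / (t:ℂ))‖ ^ 2
            - t⁻¹ ^ 2 * ‖fderiv ℝ u (circleMap 0 t θ) (Complex.I * circleMap 0 t θ)‖ ^ 2) * t)
        = (2 / t) * ∫ x in Metric.ball (0:ℂ) t, ⟪τ x, fderiv ℝ u x x⟫ := by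
  intro t ht
  have hud : Differentiable ℝ u := hu.differentiable two_ne_zero
  have hfd : Differentiable ℝ (fderiv ℝ u) :=
    (hu.fderiv_right (m := 1) (le_refl 2)).differentiable one_ne_zero
  have hL1 : ∀ (x v w : ℂ), fderiv ℝ (fun y => fderiv ℝ u y v) x w
      = fderiv ℝ (fderiv ℝ u) x w v := by
    intro x v w
    have h := fderiv_clm_apply (𝕜 := ℝ) (c := fderiv ℝ u) (u := fun _ => v)
      (hfd x) (differentiableAt_const v)
    rw [h]
    simp
  have hx : ∀ x : ℂ, (fderiv ℝ u x) x
      = x.re • (fderiv ℝ u x) 1 + x.im • (fderiv ℝ u x) Complex.I := by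
    intro x
    have e : x = x.re • (1:ℂ) + x.im • Complex.I := by
      apply Complex.ext <;> simp
    set L := fderiv ℝ u x
    conv_lhs => rw [e]
    rw [map_add, _root_.map_smul, _root_.map_smul]
  have hA : ∀ x : ℂ, ⟪τ x, fderiv ℝ u x x⟫ = pohg u x := by
    intro x
    rw [← heq x, hL1 x 1 1, hL1 x Complex.I Complex.I]
    have h0 : ⟪A x, (fderiv ℝ u x) x⟫ = 0 := by
      rw [hx x, inner_add_right, real_inner_smul_right, real_inner_smul_right,
        (hperp x).1, (hperp x).2]
      ring
    unfold pohg
    rw [inner_add_left, h0, add_zero]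
  simp_rw [hA]
  rw [poh_key hu ht]
  have hΨ : ∀ θ : ℝ,
      (‖fderiv ℝ u (circleMap 0 t θ) (circleMap 0 t θ / (t:ℂ))‖ ^ 2
        - t⁻¹ ^ 2 * ‖fderiv ℝ u (circleMap 0 t θ) (Complex.I * circleMap 0 t θ)‖ ^ 2) * t
      = (2/t) * pohG u t θ := by
    intro θ
    have hdiv : circleMap 0 t θ / (t:ℂ) = t⁻¹ • circleMap 0 t θ := by
      rw [Complex.real_smul, Complex.ofReal_inv, div_eq_mul_inv, mul_comm]
    rw [hdiv, _root_.map_smul, norm_smul]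
    unfold pohG
    rw [real_inner_self_eq_norm_sq, real_inner_self_eq_norm_sq]
    have ht' : t ≠ 0 := ne_of_gt ht
    rw [Real.norm_eq_abs, abs_of_pos (inv_pos.mpr ht), mul_pow]
    field_simp
  simp_rw [hΨ]
  rw [intervalIntegral.integral_const_mul]
  congr 1
  have hper : Function.Periodic (fun θ => pohG u t θ) (2*π) := by
    intro θ
    unfold pohG
    dsimp only
    rw [periodic_circleMap 0 t θ]
  have h2 := hper.intervalIntegral_add_eq 0 (-π)
  rw [zero_add, show -π + 2*π = π by ring] at h2
  rw [h2, intervalIntegral.integral_of_le (by linarith [Real.pi_pos]),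
    MeasureTheory.integral_Ioc_eq_integral_Ioo]
end

section
/- Under the hypotheses of the Pohozaev identity (Δu + A = τ with A ⊥ ∇u pointwise), integrating over t ∈ [0, δ] yields ∫_{D_δ} (|∂_r u|² - r^{-2}|∂_θ u|²) dx = ∫₀^δ (2/t) ∫_{D_t} τ · (x · ∇u) dx dt. -/
open Real MeasureTheory RealInnerProductSpace
open Set


noncomputable def pohC (θ : ℝ) : ℂ := (Real.cos θ : ℂ) + (Real.sin θ : ℂ) * Complex.I

lemma pohC_symm (p : ℝ × ℝ) : Complex.polarCoord.symm p = (p.1 : ℂ) * pohC p.2 :=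
  Complex.polarCoord_symm_apply p

lemma pohC_hasDerivAt (θ : ℝ) : HasDerivAt pohC (Complex.I * pohC θ) θ := by
  have h1 : HasDerivAt (fun θ : ℝ => (Real.cos θ : ℂ)) (-Real.sin θ : ℝ) θ :=
    (Real.hasDerivAt_cos θ).ofReal_comp
  have h2 : HasDerivAt (fun θ : ℝ => (Real.sin θ : ℂ) * Complex.I)
      ((Real.cos θ : ℂ) * Complex.I) θ :=
    ((Real.hasDerivAt_sin θ).ofReal_comp).mul_const Complex.I
  have := h1.add h2
  refine this.congr_deriv ?_
  unfold pohC
  rw [Complex.ofReal_neg]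
  linear_combination (-(Real.sin θ:ℂ)) * Complex.I_sq

lemma pohC_continuous : Continuous pohC := by
  unfold pohC
  exact (Complex.continuous_ofReal.comp Real.continuous_cos).add
    ((Complex.continuous_ofReal.comp Real.continuous_sin).mul continuous_const)

lemma pohC_pi : pohC π = pohC (-π) := by
  simp [pohC]

lemma poh_ofReal_mul_hasDerivAt (z : ℂ) (r : ℝ) :
    HasDerivAt (fun r : ℝ => (r : ℂ) * z) z r := by
  simpa using (Complex.ofRealCLM.hasDerivAt (x := r)).mul_const z

lemma poh_polar_ball {E : Type*} [NormedAddCommGroup E] [NormedSpace ℝ E] (f : ℂ → E)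
    {t : ℝ} (ht : 0 < t) :
    ∫ x in Metric.ball (0:ℂ) t, f x
      = ∫ p in Ioo (0:ℝ) t ×ˢ Ioo (-π) π, p.1 • f (Complex.polarCoord.symm p) := by
  rw [← integral_indicator measurableSet_ball,
    ← Complex.integral_comp_polarCoord_symm (Set.indicator (Metric.ball 0 t) f),
    polarCoord_target]
  rw [← integral_indicator (measurableSet_Ioi.prod measurableSet_Ioo),
    ← integral_indicator ((measurableSet_Ioo).prod measurableSet_Ioo)]
  congr 1
  ext p
  by_cases h1 : p ∈ Ioi (0:ℝ) ×ˢ Ioo (-π) π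
  · rw [Set.indicator_of_mem h1]
    have habs : ‖Complex.polarCoord.symm p‖ = p.1 := by
      rw [Complex.norm_polarCoord_symm, abs_of_pos h1.1]
    by_cases h2 : p.1 < t
    · have hmem : p ∈ Ioo (0:ℝ) t ×ˢ Ioo (-π) π := ⟨⟨h1.1, h2⟩, h1.2⟩
      rw [Set.indicator_of_mem hmem, Set.indicator_of_mem]
      rw [Metric.mem_ball, Complex.dist_eq, sub_zero, habs]
      exact h2
    · have hnmem : p ∉ Ioo (0:ℝ) t ×ˢ Ioo (-π) π := by
        intro hc; exact h2 hc.1.2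
      rw [Set.indicator_of_notMem hnmem, Set.indicator_of_notMem, smul_zero]
      rw [Metric.mem_ball, Complex.dist_eq, sub_zero, habs]
      exact h2
  · have hnmem : p ∉ Ioo (0:ℝ) t ×ˢ Ioo (-π) π := by
      intro hc; exact h1 ⟨hc.1.1, hc.2⟩
    rw [Set.indicator_of_notMem hnmem, Set.indicator_of_notMem h1]

lemma poh_setIntegral_prod (f : ℝ × ℝ → ℝ) {s t : Set ℝ}
    (hf : IntegrableOn f (s ×ˢ t)) :
    ∫ z in s ×ˢ t, f z = ∫ x in s, ∫ y in t, f (x, y) := by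
  rw [Measure.volume_eq_prod] at hf ⊢
  exact MeasureTheory.setIntegral_prod f hf

lemma poh_setIntegral_prod_symm (f : ℝ × ℝ → ℝ) {s t : Set ℝ}
    (hf : IntegrableOn f (s ×ˢ t)) :
    ∫ z in s ×ˢ t, f z = ∫ y in t, ∫ x in s, f (x, y) := by
  rw [Measure.volume_eq_prod] at hf ⊢
  simp only [IntegrableOn, ← Measure.prod_restrict s t] at hf
  rw [← Measure.prod_restrict s t]
  exact MeasureTheory.integral_prod_symm f hf

lemma poh_integrableOn_rect {f : ℝ × ℝ → ℝ} (hf : Continuous f) (a b c d : ℝ) :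
    IntegrableOn f (Ioo a b ×ˢ Ioo c d) := by
  have : IntegrableOn f (Icc a b ×ˢ Icc c d) :=
    hf.continuousOn.integrableOn_compact (isCompact_Icc.prod isCompact_Icc)
  exact this.mono_set (Set.prod_mono Ioo_subset_Icc_self Ioo_subset_Icc_self)

lemma poh_div (V₁ V₂ : ℂ → ℝ) (hV₁ : ContDiff ℝ 1 V₁) (hV₂ : ContDiff ℝ 1 V₂)
    {t : ℝ} (ht : 0 < t) :
    ∫ x in Metric.ball (0:ℂ) t, (fderiv ℝ V₁ x 1 + fderiv ℝ V₂ x Complex.I)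
      = ∫ θ in Ioo (-π) π,
          (t * Real.cos θ * V₁ ((t:ℂ) * pohC θ) + t * Real.sin θ * V₂ ((t:ℂ) * pohC θ)) := by
  have hdV₁ : Differentiable ℝ V₁ := hV₁.differentiable one_ne_zero
  have hdV₂ : Differentiable ℝ V₂ := hV₂.differentiable one_ne_zero
  have hcf₁ : Continuous (fderiv ℝ V₁) := hV₁.continuous_fderiv one_ne_zero
  have hcf₂ : Continuous (fderiv ℝ V₂) := hV₂.continuous_fderiv one_ne_zero
  have hc2 : Continuous (fun p : ℝ × ℝ => pohC p.2) := pohC_continuous.comp continuous_snd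
  have hx : Continuous (fun p : ℝ × ℝ => (p.1 : ℂ) * pohC p.2) :=
    (Complex.continuous_ofReal.comp continuous_fst).mul hc2
  have hv2 : Continuous (fun p : ℝ × ℝ => (p.1 : ℂ) * (Complex.I * pohC p.2)) :=
    (Complex.continuous_ofReal.comp continuous_fst).mul (continuous_const.mul hc2)
  have hcosc : Continuous (fun p : ℝ × ℝ => Real.cos p.2) := Real.continuous_cos.comp continuous_snd
  have hsinc : Continuous (fun p : ℝ × ℝ => Real.sin p.2) := Real.continuous_sin.comp continuous_snd
  set Wr : ℝ × ℝ → ℝ := fun p =>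
    Real.cos p.2 * V₁ ((p.1:ℂ) * pohC p.2) + Real.sin p.2 * V₂ ((p.1:ℂ) * pohC p.2)
      + p.1 * (Real.cos p.2 * fderiv ℝ V₁ ((p.1:ℂ) * pohC p.2) (pohC p.2)
        + Real.sin p.2 * fderiv ℝ V₂ ((p.1:ℂ) * pohC p.2) (pohC p.2)) with hWr
  set Zθ : ℝ × ℝ → ℝ := fun p =>
    -(Real.cos p.2 * V₁ ((p.1:ℂ) * pohC p.2)) - Real.sin p.2 * V₂ ((p.1:ℂ) * pohC p.2)
      + (-Real.sin p.2 * fderiv ℝ V₁ ((p.1:ℂ) * pohC p.2) ((p.1:ℂ) * (Complex.I * pohC p.2))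
        + Real.cos p.2 * fderiv ℝ V₂ ((p.1:ℂ) * pohC p.2) ((p.1:ℂ) * (Complex.I * pohC p.2))) with hZθ
  have hWrc : Continuous Wr := by
    rw [hWr]
    exact ((hcosc.mul ((hV₁.continuous).comp hx)).add
        (hsinc.mul ((hV₂.continuous).comp hx))).add
      (continuous_fst.mul ((hcosc.mul (((hcf₁.comp hx).clm_apply hc2))).add
        (hsinc.mul ((hcf₂.comp hx).clm_apply hc2))))
  have hZθc : Continuous Zθ := by
    rw [hZθ]
    exact (((hcosc.mul ((hV₁.continuous).comp hx)).neg).sub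
        (hsinc.mul ((hV₂.continuous).comp hx))).add
      (((hsinc.neg).mul (((hcf₁.comp hx).clm_apply hv2))).add
        (hcosc.mul ((hcf₂.comp hx).clm_apply hv2)))
  -- radial derivative
  have hWd : ∀ (θ r : ℝ), HasDerivAt
      (fun r : ℝ => r * Real.cos θ * V₁ ((r:ℂ) * pohC θ) + r * Real.sin θ * V₂ ((r:ℂ) * pohC θ))
      (Wr (r, θ)) r := by
    intro θ r
    have hxr : HasDerivAt (fun r : ℝ => (r:ℂ) * pohC θ) (pohC θ) r :=
      poh_ofReal_mul_hasDerivAt _ r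
    have h1 : HasDerivAt (fun r : ℝ => V₁ ((r:ℂ) * pohC θ))
        (fderiv ℝ V₁ ((r:ℂ) * pohC θ) (pohC θ)) r :=
      (hdV₁ _).hasFDerivAt.comp_hasDerivAt r hxr
    have h2 : HasDerivAt (fun r : ℝ => V₂ ((r:ℂ) * pohC θ))
        (fderiv ℝ V₂ ((r:ℂ) * pohC θ) (pohC θ)) r :=
      (hdV₂ _).hasFDerivAt.comp_hasDerivAt r hxr
    have ha : HasDerivAt (fun r : ℝ => r * Real.cos θ) (Real.cos θ) r := by
      simpa using (hasDerivAt_id r).mul_const (Real.cos θ)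
    have hb : HasDerivAt (fun r : ℝ => r * Real.sin θ) (Real.sin θ) r := by
      simpa using (hasDerivAt_id r).mul_const (Real.sin θ)
    have := (ha.mul h1).add (hb.mul h2)
    refine this.congr_deriv ?_
    rw [hWr]
    ring
  -- angular derivative
  have hZd : ∀ (r θ : ℝ), HasDerivAt
      (fun θ : ℝ => -Real.sin θ * V₁ ((r:ℂ) * pohC θ) + Real.cos θ * V₂ ((r:ℂ) * pohC θ))
      (Zθ (r, θ)) θ := by
    intro r θ
    have hxθ : HasDerivAt (fun θ : ℝ => (r:ℂ) * pohC θ) ((r:ℂ) * (Complex.I * pohC θ)) θ :=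
      (pohC_hasDerivAt θ).const_mul (r:ℂ)
    have h1 : HasDerivAt (fun θ : ℝ => V₁ ((r:ℂ) * pohC θ))
        (fderiv ℝ V₁ ((r:ℂ) * pohC θ) ((r:ℂ) * (Complex.I * pohC θ))) θ :=
      (hdV₁ _).hasFDerivAt.comp_hasDerivAt θ hxθ
    have h2 : HasDerivAt (fun θ : ℝ => V₂ ((r:ℂ) * pohC θ))
        (fderiv ℝ V₂ ((r:ℂ) * pohC θ) ((r:ℂ) * (Complex.I * pohC θ))) θ :=
      (hdV₂ _).hasFDerivAt.comp_hasDerivAt θ hxθ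
    have ha : HasDerivAt (fun θ : ℝ => -Real.sin θ) (-Real.cos θ) θ :=
      (Real.hasDerivAt_sin θ).neg
    have hb : HasDerivAt Real.cos (-Real.sin θ) θ := Real.hasDerivAt_cos θ
    have := (ha.mul h1).add (hb.mul h2)
    refine this.congr_deriv ?_
    rw [hZθ]
    ring
  -- algebraic identity
  have key : ∀ p : ℝ × ℝ, Wr p + Zθ p
      = p.1 * (fderiv ℝ V₁ ((p.1:ℂ) * pohC p.2) 1 + fderiv ℝ V₂ ((p.1:ℂ) * pohC p.2) Complex.I) := by
    rintro ⟨r, θ⟩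
    have e₁ : ∀ (L : ℂ →L[ℝ] ℝ), L (pohC θ) = Real.cos θ * L 1 + Real.sin θ * L Complex.I := by
      intro L
      have h : pohC θ = (Real.cos θ) • (1:ℂ) + (Real.sin θ) • Complex.I := by
        simp [pohC, Complex.real_smul]
      rw [h, map_add, _root_.map_smul, _root_.map_smul, smul_eq_mul, smul_eq_mul]
    have e₂ : ∀ (L : ℂ →L[ℝ] ℝ), L ((r:ℂ) * (Complex.I * pohC θ))
        = r * (-Real.sin θ * L 1 + Real.cos θ * L Complex.I) := by
      intro L
      have h : (r:ℂ) * (Complex.I * pohC θ)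
          = r • ((-Real.sin θ) • (1:ℂ) + (Real.cos θ) • Complex.I) := by
        simp only [pohC, Complex.real_smul, smul_eq_mul]
        push_cast
        ring_nf
        rw [Complex.I_sq]
        ring
      rw [h, _root_.map_smul, map_add, _root_.map_smul, _root_.map_smul, smul_eq_mul, smul_eq_mul, smul_eq_mul]
    simp only [hWr, hZθ, e₁, e₂]
    have hcs := Real.sin_sq_add_cos_sq θ
    set a1 := fderiv ℝ V₁ ((r:ℂ) * pohC θ) 1
    set a2 := fderiv ℝ V₁ ((r:ℂ) * pohC θ) Complex.I
    set b1 := fderiv ℝ V₂ ((r:ℂ) * pohC θ) 1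
    set b2 := fderiv ℝ V₂ ((r:ℂ) * pohC θ) Complex.I
    linear_combination (r * a1 + r * b2) * hcs
  -- integrability
  have hWint : IntegrableOn Wr (Ioo (0:ℝ) t ×ˢ Ioo (-π) π) := poh_integrableOn_rect hWrc _ _ _ _
  have hZint : IntegrableOn Zθ (Ioo (0:ℝ) t ×ˢ Ioo (-π) π) := poh_integrableOn_rect hZθc _ _ _ _
  -- main computation
  rw [poh_polar_ball _ ht]
  have step1 : ∫ p in Ioo (0:ℝ) t ×ˢ Ioo (-π) π,
      p.1 • (fderiv ℝ V₁ (Complex.polarCoord.symm p) 1 + fderiv ℝ V₂ (Complex.polarCoord.symm p) Complex.I)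
      = ∫ p in Ioo (0:ℝ) t ×ˢ Ioo (-π) π, (Wr p + Zθ p) := by
    apply setIntegral_congr_fun ((measurableSet_Ioo).prod measurableSet_Ioo)
    intro p _
    dsimp only
    rw [pohC_symm, smul_eq_mul]
    exact (key p).symm
  rw [step1, integral_add hWint hZint]
  have stepW : ∫ p in Ioo (0:ℝ) t ×ˢ Ioo (-π) π, Wr p
      = ∫ θ in Ioo (-π) π,
          (t * Real.cos θ * V₁ ((t:ℂ) * pohC θ) + t * Real.sin θ * V₂ ((t:ℂ) * pohC θ)) := by
    rw [poh_setIntegral_prod_symm Wr hWint]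
    apply setIntegral_congr_fun measurableSet_Ioo
    intro θ _
    dsimp only
    rw [← integral_Ioc_eq_integral_Ioo, ← intervalIntegral.integral_of_le ht.le]
    rw [intervalIntegral.integral_eq_sub_of_hasDerivAt (fun r _ => hWd θ r)
      ((hWrc.comp (continuous_id.prodMk continuous_const)).intervalIntegrable 0 t)]
    norm_num
  have stepZ : ∫ p in Ioo (0:ℝ) t ×ˢ Ioo (-π) π, Zθ p = 0 := by
    rw [poh_setIntegral_prod Zθ hZint]
    have inner0 : ∀ r : ℝ, ∫ θ in Ioo (-π) π, Zθ (r, θ) = 0 := by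
      intro r
      rw [← integral_Ioc_eq_integral_Ioo,
        ← intervalIntegral.integral_of_le (by linarith [Real.pi_pos] : -π ≤ π)]
      rw [intervalIntegral.integral_eq_sub_of_hasDerivAt (fun θ _ => hZd r θ)
        ((hZθc.comp (continuous_const.prodMk continuous_id)).intervalIntegrable (-π) π)]
      rw [pohC_pi]
      simp
    simp only [inner0, integral_zero]
  rw [stepW, stepZ, add_zero]

lemma pohC_decomp (θ : ℝ) : pohC θ = (Real.cos θ) • (1:ℂ) + (Real.sin θ) • Complex.I := by
  simp [pohC, Complex.real_smul]

lemma pohC_I_decomp (θ : ℝ) :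
    Complex.I * pohC θ = (-Real.sin θ) • (1:ℂ) + (Real.cos θ) • Complex.I := by
  simp only [pohC, Complex.real_smul, smul_eq_mul]
  push_cast
  ring_nf
  rw [Complex.I_sq]
  ring

lemma pohC_norm (θ : ℝ) : ‖pohC θ‖ = 1 := by
  have h : pohC θ = Complex.exp (θ * Complex.I) := by
    rw [Complex.exp_mul_I]
    simp [pohC, Complex.ofReal_cos, Complex.ofReal_sin]
  rw [h, Complex.norm_exp_ofReal_mul_I]

lemma pohC_re (θ : ℝ) : (pohC θ).re = Real.cos θ := by
  simp [pohC, Complex.cos_ofReal_re]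

lemma pohC_im (θ : ℝ) : (pohC θ).im = Real.sin θ := by
  simp [pohC, Complex.sin_ofReal_re]

section

variable {K : ℕ}

lemma pohL_apply {E : Type*} [NormedAddCommGroup E] [NormedSpace ℝ E]
    (L : ℂ →L[ℝ] E) (z : ℂ) : L z = z.re • L 1 + z.im • L Complex.I := by
  conv_lhs => rw [show z = z.re • (1:ℂ) + z.im • Complex.I by
    simp [Complex.real_smul, Complex.re_add_im]]
  rw [map_add, _root_.map_smul, _root_.map_smul]

lemma poh_expand (a b : ℝ) (v w : EuclideanSpace ℝ (Fin K)) :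
    ‖a • v + b • w‖^2 = a^2 * ⟪v, v⟫ + 2*a*b*⟪v, w⟫ + b^2 * ⟪w, w⟫ := by
  rw [← real_inner_self_eq_norm_sq]
  simp only [inner_add_left, inner_add_right, real_inner_smul_left, real_inner_smul_right]
  rw [real_inner_comm w v]
  ring


end

section
variable {K : ℕ} {u : ℂ → EuclideanSpace ℝ (Fin K)}

lemma poh_fderiv_comb {a b : ℂ → ℝ} {x : ℂ} (v : ℂ)
    (ha : DifferentiableAt ℝ a x) (hb : DifferentiableAt ℝ b x) :
    fderiv ℝ (fun y => (y.re * a y + 2 * y.im * b y) / 2) x v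
      = (v.re * a x + x.re * fderiv ℝ a x v + 2 * v.im * b x + 2 * x.im * fderiv ℝ b x v) / 2 := by
  have hre : DifferentiableAt ℝ (fun y : ℂ => y.re) x :=
    (Complex.reCLM : ℂ →L[ℝ] ℝ).differentiableAt
  have him : DifferentiableAt ℝ (fun y : ℂ => y.im) x :=
    (Complex.imCLM : ℂ →L[ℝ] ℝ).differentiableAt
  have h2im : DifferentiableAt ℝ (fun y : ℂ => 2 * y.im) x := him.const_mul 2
  have hrw : (fun y : ℂ => (y.re * a y + 2 * y.im * b y) / 2)
      = fun y : ℂ => (2:ℝ)⁻¹ * (y.re * a y + 2 * y.im * b y) := by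
    funext y; ring
  rw [hrw, fderiv_const_mul (a := fun y => y.re * a y + 2 * y.im * b y) ((hre.mul ha).add (h2im.mul hb)),
    fderiv_fun_add (f := fun y => y.re * a y) (g := fun y => 2 * y.im * b y) (hre.mul ha) (h2im.mul hb),
    fderiv_fun_mul hre ha, fderiv_fun_mul h2im hb]
  have e1 : fderiv ℝ (fun y : ℂ => y.re) x = Complex.reCLM :=
    (Complex.reCLM : ℂ →L[ℝ] ℝ).fderiv
  have e2 : fderiv ℝ (fun y : ℂ => y.im) x = Complex.imCLM :=
    (Complex.imCLM : ℂ →L[ℝ] ℝ).fderiv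
  have e3 : fderiv ℝ (fun y : ℂ => 2 * y.im) x = (2:ℝ) • (Complex.imCLM : ℂ →L[ℝ] ℝ) := by
    rw [fderiv_const_mul him, e2]
  simp only [e1, e3, ContinuousLinearMap.add_apply, ContinuousLinearMap.coe_smul',
    Pi.smul_apply, smul_eq_mul, Complex.reCLM_apply, Complex.imCLM_apply]
  ring

lemma poh_fderiv_comb2 {a b : ℂ → ℝ} {x : ℂ} (v : ℂ)
    (ha : DifferentiableAt ℝ a x) (hb : DifferentiableAt ℝ b x) :
    fderiv ℝ (fun y => (2 * y.re * b y - y.im * a y) / 2) x v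
      = (2 * v.re * b x + 2 * x.re * fderiv ℝ b x v - v.im * a x - x.im * fderiv ℝ a x v) / 2 := by
  have hre : DifferentiableAt ℝ (fun y : ℂ => y.re) x :=
    (Complex.reCLM : ℂ →L[ℝ] ℝ).differentiableAt
  have him : DifferentiableAt ℝ (fun y : ℂ => y.im) x :=
    (Complex.imCLM : ℂ →L[ℝ] ℝ).differentiableAt
  have h2re : DifferentiableAt ℝ (fun y : ℂ => 2 * y.re) x := hre.const_mul 2
  have hrw : (fun y : ℂ => (2 * y.re * b y - y.im * a y) / 2)
      = fun y : ℂ => (2:ℝ)⁻¹ * (2 * y.re * b y - y.im * a y) := by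
    funext y; ring
  rw [hrw, fderiv_const_mul (a := fun y => 2 * y.re * b y - y.im * a y) ((h2re.mul hb).sub (him.mul ha)),
    fderiv_fun_sub (f := fun y => 2 * y.re * b y) (g := fun y => y.im * a y) (h2re.mul hb) (him.mul ha),
    fderiv_fun_mul h2re hb, fderiv_fun_mul him ha]
  have e1 : fderiv ℝ (fun y : ℂ => y.re) x = Complex.reCLM :=
    (Complex.reCLM : ℂ →L[ℝ] ℝ).fderiv
  have e2 : fderiv ℝ (fun y : ℂ => y.im) x = Complex.imCLM :=
    (Complex.imCLM : ℂ →L[ℝ] ℝ).fderiv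
  have e3 : fderiv ℝ (fun y : ℂ => 2 * y.re) x = (2:ℝ) • (Complex.reCLM : ℂ →L[ℝ] ℝ) := by
    rw [fderiv_const_mul hre, e1]
  simp only [e2, e3, ContinuousLinearMap.add_apply, ContinuousLinearMap.sub_apply,
    ContinuousLinearMap.coe_smul', Pi.smul_apply, smul_eq_mul,
    Complex.reCLM_apply, Complex.imCLM_apply]
  ring

end

section
variable {K : ℕ} {u : ℂ → EuclideanSpace ℝ (Fin K)}

noncomputable def pohV1' (u : ℂ → EuclideanSpace ℝ (Fin K)) (x : ℂ) : ℝ :=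
  (x.re * (⟪fderiv ℝ u x 1, fderiv ℝ u x 1⟫ - ⟪fderiv ℝ u x Complex.I, fderiv ℝ u x Complex.I⟫)
    + 2 * x.im * ⟪fderiv ℝ u x 1, fderiv ℝ u x Complex.I⟫) / 2

noncomputable def pohV2' (u : ℂ → EuclideanSpace ℝ (Fin K)) (x : ℂ) : ℝ :=
  (2 * x.re * ⟪fderiv ℝ u x 1, fderiv ℝ u x Complex.I⟫
    - x.im * (⟪fderiv ℝ u x 1, fderiv ℝ u x 1⟫
        - ⟪fderiv ℝ u x Complex.I, fderiv ℝ u x Complex.I⟫)) / 2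

lemma poh_g_contDiff' (hu : ContDiff ℝ 2 u) (v : ℂ) :
    ContDiff ℝ 1 (fun x => fderiv ℝ u x v) :=
  (hu.fderiv_right (by norm_num)).clm_apply contDiff_const

lemma poh_snd_deriv' (hu : ContDiff ℝ 2 u) (x v w : ℂ) :
    fderiv ℝ (fun y => fderiv ℝ u y v) x w = fderiv ℝ (fderiv ℝ u) x w v := by
  have hDf : DifferentiableAt ℝ (fderiv ℝ u) x :=
    ((hu.fderiv_right (by norm_num : (1:WithTop ℕ∞) + 1 ≤ 2)).differentiable one_ne_zero) x
  have h := ((ContinuousLinearMap.apply ℝ (EuclideanSpace ℝ (Fin K)) v).hasFDerivAt.comp x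
    hDf.hasFDerivAt).fderiv
  calc fderiv ℝ (fun y => fderiv ℝ u y v) x w
      = fderiv ℝ ((ContinuousLinearMap.apply ℝ (EuclideanSpace ℝ (Fin K)) v) ∘ (fderiv ℝ u)) x w := rfl
    _ = ((ContinuousLinearMap.apply ℝ (EuclideanSpace ℝ (Fin K)) v).comp
          (fderiv ℝ (fderiv ℝ u) x)) w := by rw [h]
    _ = fderiv ℝ (fderiv ℝ u) x w v := rfl

lemma poh_clairaut' (hu : ContDiff ℝ 2 u) (x : ℂ) :
    fderiv ℝ (fun y => fderiv ℝ u y 1) x Complex.I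
      = fderiv ℝ (fun y => fderiv ℝ u y Complex.I) x 1 := by
  rw [poh_snd_deriv' hu, poh_snd_deriv' hu]
  exact (hu.contDiffAt.isSymmSndFDerivAt (by simp [minSmoothness_of_isRCLikeNormedField])).eq Complex.I 1

lemma pohL_apply' {E : Type*} [NormedAddCommGroup E] [NormedSpace ℝ E]
    (L : ℂ →L[ℝ] E) (z : ℂ) : L z = z.re • L 1 + z.im • L Complex.I := by
  conv_lhs => rw [show z = z.re • (1:ℂ) + z.im • Complex.I by
    simp [Complex.real_smul, Complex.re_add_im]]
  rw [map_add, _root_.map_smul, _root_.map_smul]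

lemma poh_div_eq (hu : ContDiff ℝ 2 u) (x : ℂ) :
    fderiv ℝ (pohV1' u) x 1 + fderiv ℝ (pohV2' u) x Complex.I
      = ⟪fderiv ℝ (fun y => fderiv ℝ u y 1) x 1
          + fderiv ℝ (fun y => fderiv ℝ u y Complex.I) x Complex.I, fderiv ℝ u x x⟫ := by
  have hd1 : DifferentiableAt ℝ (fun y => fderiv ℝ u y 1) x :=
    ((poh_g_contDiff' hu 1).differentiable one_ne_zero) x
  have hd2 : DifferentiableAt ℝ (fun y => fderiv ℝ u y Complex.I) x :=
    ((poh_g_contDiff' hu Complex.I).differentiable one_ne_zero) x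
  have haD : DifferentiableAt ℝ
      (fun y => ⟪fderiv ℝ u y 1, fderiv ℝ u y 1⟫
        - ⟪fderiv ℝ u y Complex.I, fderiv ℝ u y Complex.I⟫) x :=
    (hd1.inner ℝ hd1).sub (hd2.inner ℝ hd2)
  have hbD : DifferentiableAt ℝ (fun y => ⟪fderiv ℝ u y 1, fderiv ℝ u y Complex.I⟫) x :=
    hd1.inner ℝ hd2
  have h1 := poh_fderiv_comb (a := fun y => ⟪fderiv ℝ u y 1, fderiv ℝ u y 1⟫
        - ⟪fderiv ℝ u y Complex.I, fderiv ℝ u y Complex.I⟫)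
      (b := fun y => ⟪fderiv ℝ u y 1, fderiv ℝ u y Complex.I⟫) (1:ℂ) haD hbD
  have h2 := poh_fderiv_comb2 (a := fun y => ⟪fderiv ℝ u y 1, fderiv ℝ u y 1⟫
        - ⟪fderiv ℝ u y Complex.I, fderiv ℝ u y Complex.I⟫)
      (b := fun y => ⟪fderiv ℝ u y 1, fderiv ℝ u y Complex.I⟫) (Complex.I) haD hbD
  have hV1 : pohV1' u = fun y : ℂ => (y.re * (⟪fderiv ℝ u y 1, fderiv ℝ u y 1⟫
        - ⟪fderiv ℝ u y Complex.I, fderiv ℝ u y Complex.I⟫)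
      + 2 * y.im * ⟪fderiv ℝ u y 1, fderiv ℝ u y Complex.I⟫) / 2 := rfl
  have hV2 : pohV2' u = fun y : ℂ => (2 * y.re * ⟪fderiv ℝ u y 1, fderiv ℝ u y Complex.I⟫
      - y.im * (⟪fderiv ℝ u y 1, fderiv ℝ u y 1⟫
        - ⟪fderiv ℝ u y Complex.I, fderiv ℝ u y Complex.I⟫)) / 2 := rfl
  rw [hV1, hV2, h1, h2]
  beta_reduce
  have hsub : ∀ v : ℂ, fderiv ℝ (fun y => ⟪fderiv ℝ u y 1, fderiv ℝ u y 1⟫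
        - ⟪fderiv ℝ u y Complex.I, fderiv ℝ u y Complex.I⟫) x v
      = (⟪fderiv ℝ u x 1, fderiv ℝ (fun y => fderiv ℝ u y 1) x v⟫
          + ⟪fderiv ℝ (fun y => fderiv ℝ u y 1) x v, fderiv ℝ u x 1⟫)
        - (⟪fderiv ℝ u x Complex.I, fderiv ℝ (fun y => fderiv ℝ u y Complex.I) x v⟫
          + ⟪fderiv ℝ (fun y => fderiv ℝ u y Complex.I) x v, fderiv ℝ u x Complex.I⟫) := by
    intro v
    rw [fderiv_fun_sub (hd1.inner ℝ hd1) (hd2.inner ℝ hd2)]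
    rw [ContinuousLinearMap.sub_apply, fderiv_inner_apply ℝ hd1 hd1 v, fderiv_inner_apply ℝ hd2 hd2 v]
  have hb : ∀ v : ℂ, fderiv ℝ (fun y => ⟪fderiv ℝ u y 1, fderiv ℝ u y Complex.I⟫) x v
      = ⟪fderiv ℝ u x 1, fderiv ℝ (fun y => fderiv ℝ u y Complex.I) x v⟫
        + ⟪fderiv ℝ (fun y => fderiv ℝ u y 1) x v, fderiv ℝ u x Complex.I⟫ :=
    fun v => fderiv_inner_apply ℝ hd1 hd2 v
  rw [hsub, hsub, hb, hb]
  rw [poh_clairaut' hu x]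
  rw [pohL_apply' (fderiv ℝ u x) x]
  simp only [inner_add_left, inner_add_right, real_inner_smul_right,
    Complex.one_re, Complex.one_im, Complex.I_re, Complex.I_im]
  set g1 := fderiv ℝ u x 1
  set g2 := fderiv ℝ u x Complex.I
  set P1 := fderiv ℝ (fun y => fderiv ℝ u y 1) x 1
  set Q1 := fderiv ℝ (fun y => fderiv ℝ u y Complex.I) x 1
  set QI := fderiv ℝ (fun y => fderiv ℝ u y Complex.I) x Complex.I
  rw [real_inner_comm g1 P1, real_inner_comm g2 Q1, real_inner_comm g1 QI,
    real_inner_comm g1 Q1, real_inner_comm g2 QI]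
  ring
end

section
variable {K : ℕ} {u : ℂ → EuclideanSpace ℝ (Fin K)}

lemma pohV1'_contDiff (hu : ContDiff ℝ 2 u) : ContDiff ℝ 1 (pohV1' u) := by
  unfold pohV1'
  have h1 := poh_g_contDiff' hu 1
  have h2 := poh_g_contDiff' hu Complex.I
  exact (((Complex.reCLM : ℂ →L[ℝ] ℝ).contDiff.mul ((h1.inner ℝ h1).sub (h2.inner ℝ h2))).add
    ((contDiff_const.mul (Complex.imCLM : ℂ →L[ℝ] ℝ).contDiff).mul (h1.inner ℝ h2))).div_const 2

lemma pohV2'_contDiff (hu : ContDiff ℝ 2 u) : ContDiff ℝ 1 (pohV2' u) := by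
  unfold pohV2'
  have h1 := poh_g_contDiff' hu 1
  have h2 := poh_g_contDiff' hu Complex.I
  exact (((contDiff_const.mul (Complex.reCLM : ℂ →L[ℝ] ℝ).contDiff).mul (h1.inner ℝ h2)).sub
    ((Complex.imCLM : ℂ →L[ℝ] ℝ).contDiff.mul
      ((h1.inner ℝ h1).sub (h2.inner ℝ h2)))).div_const 2

end


/-- Integrated Pohozaev identity: under `Δu + A = τ` with `A ⊥ ∇u` pointwise,
`∫_{D_δ} (|∂_r u|² - r⁻²|∂_θ u|²) dx = ∫₀^δ (2/t) ∫_{D_t} τ·(x·∇u) dx dt`. -/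
theorem stmt3 (K : ℕ) (u A τ : ℂ → EuclideanSpace ℝ (Fin K)) (δ : ℝ) (hδ : 0 < δ)
    (hu : ContDiff ℝ 2 u)
    (heq : ∀ x : ℂ,
      fderiv ℝ (fun y => fderiv ℝ u y 1) x 1
        + fderiv ℝ (fun y => fderiv ℝ u y Complex.I) x Complex.I + A x = τ x)
    (hperp : ∀ x : ℂ, ⟪A x, fderiv ℝ u x 1⟫ = 0 ∧ ⟪A x, fderiv ℝ u x Complex.I⟫ = 0) :
    (∫ x in Metric.ball (0:ℂ) δ,
        (‖fderiv ℝ u x x‖ ^ 2 - ‖fderiv ℝ u x (Complex.I * x)‖ ^ 2) / ‖x‖ ^ 2)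
      = ∫ t in (0:ℝ)..δ, (2 / t) * ∫ x in Metric.ball (0:ℂ) t, ⟪τ x, fderiv ℝ u x x⟫ := by
  have hV1c : ContDiff ℝ 1 (pohV1' u) := pohV1'_contDiff hu
  have hV2c : ContDiff ℝ 1 (pohV2' u) := pohV2'_contDiff hu
  have hfc : Continuous (fderiv ℝ u) := hu.continuous_fderiv (by norm_num)
  have hc2 : Continuous (fun p : ℝ × ℝ => pohC p.2) := pohC_continuous.comp continuous_snd
  have hx : Continuous (fun p : ℝ × ℝ => (p.1 : ℂ) * pohC p.2) :=
    (Complex.continuous_ofReal.comp continuous_fst).mul hc2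
  set φ : ℝ × ℝ → ℝ := fun p =>
    ‖fderiv ℝ u ((p.1:ℂ) * pohC p.2) (pohC p.2)‖^2
      - ‖fderiv ℝ u ((p.1:ℂ) * pohC p.2) (Complex.I * pohC p.2)‖^2 with hφ
  have hφc : Continuous φ := by
    rw [hφ]
    exact (((hfc.comp hx).clm_apply hc2).norm.pow 2).sub
      (((hfc.comp hx).clm_apply (continuous_const.mul hc2)).norm.pow 2)
  set C : ℝ → ℝ := fun t => ∫ θ in Ioo (-π) π, φ (t, θ) with hC
  have hnorm : ∀ (L : ℂ →L[ℝ] EuclideanSpace ℝ (Fin K)) (θ : ℝ),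
      ‖L (pohC θ)‖^2 = (Real.cos θ)^2 * ⟪L 1, L 1⟫
        + 2*(Real.cos θ)*(Real.sin θ)*⟪L 1, L Complex.I⟫
        + (Real.sin θ)^2 * ⟪L Complex.I, L Complex.I⟫ := by
    intro L θ
    rw [pohC_decomp θ, map_add, _root_.map_smul, _root_.map_smul]
    exact poh_expand _ _ _ _
  have hnormI : ∀ (L : ℂ →L[ℝ] EuclideanSpace ℝ (Fin K)) (θ : ℝ),
      ‖L (Complex.I * pohC θ)‖^2 = (Real.sin θ)^2 * ⟪L 1, L 1⟫
        - 2*(Real.sin θ)*(Real.cos θ)*⟪L 1, L Complex.I⟫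
        + (Real.cos θ)^2 * ⟪L Complex.I, L Complex.I⟫ := by
    intro L θ
    rw [pohC_I_decomp θ, map_add, _root_.map_smul, _root_.map_smul]
    rw [poh_expand]
    ring
  have hbd : ∀ t θ : ℝ, t * Real.cos θ * pohV1' u ((t:ℂ) * pohC θ)
      + t * Real.sin θ * pohV2' u ((t:ℂ) * pohC θ) = t^2/2 * φ (t, θ) := by
    intro t θ
    have hre : ((t:ℂ) * pohC θ).re = t * Real.cos θ := by
      rw [Complex.mul_re]
      simp [pohC_re, pohC_im]
    have him : ((t:ℂ) * pohC θ).im = t * Real.sin θ := by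
      rw [Complex.mul_im]
      simp [pohC_re, pohC_im]
    rw [hφ]
    dsimp only
    rw [hnorm (fderiv ℝ u ((t:ℂ) * pohC θ)) θ, hnormI (fderiv ℝ u ((t:ℂ) * pohC θ)) θ]
    unfold pohV1' pohV2'
    rw [hre, him]
    ring
  have hG : ∀ t : ℝ, 0 < t →
      (2/t) * (∫ x in Metric.ball (0:ℂ) t, ⟪τ x, fderiv ℝ u x x⟫) = t * C t := by
    intro t ht
    have hpt : ∀ x : ℂ, ⟪τ x, fderiv ℝ u x x⟫
        = fderiv ℝ (pohV1' u) x 1 + fderiv ℝ (pohV2' u) x Complex.I := by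
      intro x
      rw [← heq x, inner_add_left]
      have hA : ⟪A x, fderiv ℝ u x x⟫ = 0 := by
        rw [pohL_apply' (fderiv ℝ u x) x, inner_add_right, real_inner_smul_right,
          real_inner_smul_right, (hperp x).1, (hperp x).2]
        ring
      rw [hA, add_zero, poh_div_eq hu x]
    calc (2/t) * ∫ x in Metric.ball (0:ℂ) t, ⟪τ x, fderiv ℝ u x x⟫
        = (2/t) * ∫ x in Metric.ball (0:ℂ) t,
            (fderiv ℝ (pohV1' u) x 1 + fderiv ℝ (pohV2' u) x Complex.I) := by
          simp only [hpt]
      _ = (2/t) * ∫ θ in Ioo (-π) π,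
            (t * Real.cos θ * pohV1' u ((t:ℂ) * pohC θ)
              + t * Real.sin θ * pohV2' u ((t:ℂ) * pohC θ)) := by
          rw [poh_div _ _ hV1c hV2c ht]
      _ = (2/t) * ∫ θ in Ioo (-π) π, (t^2/2 * φ (t, θ)) := by
          simp only [hbd]
      _ = (2/t) * (t^2/2 * C t) := by rw [MeasureTheory.integral_const_mul, hC]
      _ = t * C t := by field_simp
  have hRHS : (∫ t in (0:ℝ)..δ, (2/t) * ∫ x in Metric.ball (0:ℂ) t, ⟪τ x, fderiv ℝ u x x⟫)
      = ∫ t in (0:ℝ)..δ, t * C t := by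
    apply intervalIntegral.integral_congr
    intro t htmem
    rw [uIcc_of_le hδ.le] at htmem
    rcases eq_or_lt_of_le htmem.1 with h0 | h0
    · rw [← h0]
      simp [show Metric.ball (0:ℂ) (0:ℝ) = ∅ from Metric.ball_eq_empty.mpr le_rfl]
    · exact hG t h0
  rw [hRHS, poh_polar_ball _ hδ]
  have step : ∫ p in Ioo (0:ℝ) δ ×ˢ Ioo (-π) π,
      p.1 • ((‖fderiv ℝ u (Complex.polarCoord.symm p) (Complex.polarCoord.symm p)‖ ^ 2
        - ‖fderiv ℝ u (Complex.polarCoord.symm p)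
            (Complex.I * Complex.polarCoord.symm p)‖ ^ 2)
          / ‖Complex.polarCoord.symm p‖ ^ 2)
      = ∫ p in Ioo (0:ℝ) δ ×ˢ Ioo (-π) π, p.1 * φ p := by
    apply setIntegral_congr_fun (measurableSet_Ioo.prod measurableSet_Ioo)
    intro p hp
    dsimp only
    rw [pohC_symm]
    have hp1 : 0 < p.1 := hp.1.1
    have hxnorm : ‖(p.1:ℂ) * pohC p.2‖ = p.1 := by
      rw [norm_mul, Complex.norm_real, pohC_norm, mul_one, Real.norm_of_nonneg hp1.le]
    have e1 : fderiv ℝ u ((p.1:ℂ) * pohC p.2) ((p.1:ℂ) * pohC p.2)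
        = p.1 • fderiv ℝ u ((p.1:ℂ) * pohC p.2) (pohC p.2) := by
      rw [← _root_.map_smul]
      congr 1
    have e2 : Complex.I * ((p.1:ℂ) * pohC p.2) = (p.1:ℂ) * (Complex.I * pohC p.2) := by ring
    have e3 : fderiv ℝ u ((p.1:ℂ) * pohC p.2) ((p.1:ℂ) * (Complex.I * pohC p.2))
        = p.1 • fderiv ℝ u ((p.1:ℂ) * pohC p.2) (Complex.I * pohC p.2) := by
      rw [← _root_.map_smul]
      congr 1
    rw [e1, e2, e3, hxnorm, norm_smul, norm_smul, hφ]
    dsimp only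
    rw [Real.norm_eq_abs, abs_of_pos hp1]
    field_simp
    ring
  rw [step]
  have hΦc : Continuous (fun p : ℝ × ℝ => p.1 * φ p) := continuous_fst.mul hφc
  rw [poh_setIntegral_prod _ (poh_integrableOn_rect hΦc _ _ _ _)]
  have inner0 : ∀ r : ℝ, (∫ θ in Ioo (-π) π, (r * φ (r, θ))) = r * C r := by
    intro r
    rw [MeasureTheory.integral_const_mul, hC]
  calc ∫ r in Ioo (0:ℝ) δ, ∫ θ in Ioo (-π) π, (r * φ (r, θ))
      = ∫ r in Ioo (0:ℝ) δ, r * C r := by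
        apply setIntegral_congr_fun measurableSet_Ioo
        intro r _
        exact inner0 r
    _ = ∫ t in (0:ℝ)..δ, t * C t := by
        rw [intervalIntegral.integral_of_le hδ.le, integral_Ioc_eq_integral_Ioo]
end
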